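/- Let K be the simplicial complex on vertex set [d+1] × [d] whose faces are the sets σ with |σ ∩ ([d+1] × {j})| ≤ 1 for each j (the d-fold join of d+1 isolated points). The minimal non-faces of K are exactly the pairs {(a, j), (b, j)} with a ≠ب b, and the Kneser graph of the minimal non-faces has chromatic number d(d − 1). -/

import Mathlib

/-- The simplicial complex `K = L^{*d}` on the vertex set `[d+1] × [d]`,
the `d`-fold join of `d + 1` isolated points: a set `σ` is a face iff it
contains at most one vertex from each part `[d+1] × {j}`. -/
def joinOfPoints (d : ℕ) : Set (Finset (Fin (d + 1) × Fin d)) :=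
  {σ | ∀ j : Fin d, (σ.filter fun p => p.2 = j).card ≤ 1}

/-- Minimal non-faces of `joinOfPoints d`. -/
def IsMinNF (d : ℕ) (F : Finset (Fin (d + 1) × Fin d)) : Prop :=
  F ∉ joinOfPoints d ∧ ∀ G ⊂ F, G ∈ joinOfPoints d

/-- The Kneser graph of the family of minimal non-faces: vertices are the
minimal non-faces, adjacent iff disjoint. -/
def minNFKneser (d : ℕ) : SimpleGraph {F : Finset (Fin (d + 1) × Fin d) // IsMinNF d F} where
  Adj F G := F ≠ G ∧ Disjoint F.1 G.1
  symm := by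
    constructor
    rintro F G ⟨h1, h2⟩
    exact ⟨h1.symm, h2.symm⟩
  loopless := by
    constructor
    rintro F ⟨h, _⟩
    exact h rfl

lemma intersecting_no_common_le_three {α : Type*} [DecidableEq α]
    (F : Finset (Finset α))
    (hcard : ∀ A ∈ F, A.card = 2)
    (hint : ∀ A ∈ F, ∀ B ∈ F, ¬ Disjoint A B)
    (hnc : ¬ ∃ x, ∀ A ∈ F, x ∈ A) : F.card ≤ 3 := by
  rcases F.eq_empty_or_nonempty with rfl | ⟨A, hA⟩
  · simp
  push_neg at hnc
  obtain ⟨a, b, hab, rfl⟩ := Finset.card_eq_two.mp (hcard A hA)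
  -- B avoiding a
  obtain ⟨B, hB, haB⟩ := hnc a
  have hBa : b ∈ B := by
    obtain ⟨x, hx1, hx2⟩ := Finset.not_disjoint_iff.mp (hint _ hA _ hB)
    rcases Finset.mem_insert.mp hx1 with rfl | hx
    · exact absurd hx2 haB
    · rwa [← Finset.mem_singleton.mp hx]
  obtain ⟨p, q, hpq, hBpq⟩ := Finset.card_eq_two.mp (hcard B hB)
  -- B = {b, c} for some c ≠ a, b
  have : ∃ c, c ≠ a ∧ c ≠ b ∧ B = {b, c} := by
    subst hBpq
    rcases Finset.mem_insert.mp hBa with rfl | hq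
    · exact ⟨q, fun h => haB (by simp [h]), hpq.symm, by rw [Finset.pair_comm]⟩
    · rw [Finset.mem_singleton] at hq
      subst hq
      exact ⟨p, fun h => haB (by simp [h]), fun h => hpq (by rw [h]), by rw [Finset.pair_comm]⟩
  obtain ⟨c, hca, hcb, hBbc⟩ := this
  -- D avoiding b
  obtain ⟨D, hD, hbD⟩ := hnc b
  have haD : a ∈ D := by
    obtain ⟨x, hx1, hx2⟩ := Finset.not_disjoint_iff.mp (hint _ hA _ hD)
    rcases Finset.mem_insert.mp hx1 with rfl | hx
    · exact hx2
    · exact absurd hx2 (by rwa [Finset.mem_singleton.mp hx])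
  have hcD : c ∈ D := by
    obtain ⟨x, hx1, hx2⟩ := Finset.not_disjoint_iff.mp (hint _ hB _ hD)
    rw [hBbc] at hx1
    rcases Finset.mem_insert.mp hx1 with rfl | hx
    · exact absurd hx2 hbD
    · rwa [← Finset.mem_singleton.mp hx]
  have hDac : D = {a, c} := by
    obtain ⟨p', q', hpq', hD2⟩ := Finset.card_eq_two.mp (hcard D hD)
    subst hD2
    rcases Finset.mem_insert.mp haD with rfl | h1 <;>
      rcases Finset.mem_insert.mp hcD with h2 | h2
    · simp_all
    · rw [Finset.mem_singleton] at h2; subst h2; rfl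
    · rw [Finset.mem_singleton] at h1; subst h1
      rcases Finset.mem_insert.mp hcD with h2 | h2
      · subst h2; rw [Finset.pair_comm]
      · rw [Finset.mem_singleton] at h2; simp_all
    · rw [Finset.mem_singleton] at h1 h2; rw [← h2] at h1; simp_all
  -- every E ∈ F is a subset of {a, b, c}
  have hsub : F ⊆ ({a,b,c} : Finset α).powersetCard 2 := by
    intro E hE
    rw [Finset.mem_powersetCard]
    refine ⟨?_, hcard E hE⟩
    intro z hz
    by_contra hzabc
    simp only [Finset.mem_insert, Finset.mem_singleton, not_or] at hzabc
    obtain ⟨hza, hzb, hzc⟩ := hzabc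
    -- E.erase z is a singleton {w}
    have hEcard := hcard E hE
    have hec : (E.erase z).card = 1 := by
      rw [Finset.card_erase_of_mem hz, hEcard]
    obtain ⟨w, hw⟩ := Finset.card_eq_one.mp hec
    have hwit : ∀ X ∈ F, X ⊆ ({a,b,c} : Finset α) → w ∈ X := by
      intro X hX hXsub
      obtain ⟨x, hx1, hx2⟩ := Finset.not_disjoint_iff.mp (hint _ hE _ hX)
      have hxz : x ≠ z := by
        intro h; subst h
        have := hXsub hx2
        simp only [Finset.mem_insert, Finset.mem_singleton] at this
        tauto
      have : x ∈ E.erase z := Finset.mem_erase.mpr ⟨hxz, hx1⟩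
      rw [hw, Finset.mem_singleton] at this
      rwa [← this]
    have hwA : w ∈ ({a, b} : Finset α) := hwit _ hA (by intro x hx; simp at hx ⊢; tauto)
    have hwB : w ∈ ({b, c} : Finset α) := by
      have := hwit _ hB (by rw [hBbc]; intro x hx; simp at hx ⊢; tauto)
      rwa [hBbc] at this
    have hwD : w ∈ ({a, c} : Finset α) := by
      have := hwit _ hD (by rw [hDac]; intro x hx; simp at hx ⊢; tauto)
      rwa [hDac] at this
    simp only [Finset.mem_insert, Finset.mem_singleton] at hwA hwB hwD
    rcases hwA with rfl | rfl
    · rcases hwB with h | h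
      · exact hab h
      · exact hca h.symm
    · rcases hwD with h | h
      · exact hab h.symm
      · exact hcb h.symm
  calc F.card ≤ (({a,b,c} : Finset α).powersetCard 2).card := Finset.card_le_card hsub
    _ ≤ 3 := by
      rw [Finset.card_powersetCard]
      have : ({a,b,c} : Finset α).card ≤ 3 :=
        (Finset.card_insert_le _ _).trans (by simpa [Nat.lt_succ_iff] using Finset.card_insert_le b ({c} : Finset α))
      calc (({a,b,c} : Finset α).card).choose 2 ≤ (3).choose 2 := Nat.choose_le_choose _ this
        _ = 3 := by decide

lemma kneser2 {n : ℕ} {β : Type*} [DecidableEq β] (c : Finset (Fin n) → β)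
    (hc : ∀ A B : Finset (Fin n), A.card = 2 → B.card = 2 → Disjoint A B → c A ≠ c B) :
    n - 2 ≤ (((Finset.univ : Finset (Fin n)).powersetCard 2).image c).card := by
  classical
  by_contra hcon
  push_neg at hcon
  set Pairs := ((Finset.univ : Finset (Fin n)).powersetCard 2) with hPairs
  set T := Pairs.image c with hT
  have hn3 : T.card + 3 ≤ n := by omega
  set cls : β → Finset (Finset (Fin n)) := fun i => Pairs.filter (fun A => c A = i) with hcls
  set S := T.filter (fun i => ∃ x, ∀ A ∈ cls i, x ∈ A) with hS
  have x0 : Fin n := ⟨0, by omega⟩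
  set f : β → Fin n := fun i =>
    if h : ∃ x, ∀ A ∈ cls i, x ∈ A then h.choose else x0 with hf
  set C := S.image f with hCdef
  have hCcard : C.card ≤ S.card := Finset.card_image_le
  set R := (Finset.univ : Finset (Fin n)) \ C with hR
  have hRcard : n - S.card ≤ R.card := by
    rw [hR, Finset.card_sdiff_of_subset (Finset.subset_univ _)]
    have := Finset.card_univ (α := Fin n)
    simp only [Finset.card_univ, Fintype.card_fin]
    omega
  set PairsR := R.powersetCard 2 with hPR
  have hmem : ∀ P ∈ PairsR, c P ∈ T \ S := by
    intro P hP
    rw [Finset.mem_powersetCard] at hP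
    have hPP : P ∈ Pairs := Finset.mem_powersetCard.mpr ⟨Finset.subset_univ _, hP.2⟩
    refine Finset.mem_sdiff.mpr ⟨Finset.mem_image_of_mem c hPP, ?_⟩
    intro hPS
    have hex : ∃ x, ∀ A ∈ cls (c P), x ∈ A := (Finset.mem_filter.mp hPS).2
    have hfeq : f (c P) = hex.choose := dif_pos hex
    have hin : f (c P) ∈ P := by
      rw [hfeq]
      exact hex.choose_spec P (Finset.mem_filter.mpr ⟨hPP, rfl⟩)
    have hinC : f (c P) ∈ C := Finset.mem_image_of_mem f hPS
    have := hP.1 hin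
    rw [hR, Finset.mem_sdiff] at this
    exact this.2 hinC
  have hsum : PairsR.card = ∑ i ∈ T \ S, (PairsR.filter (fun P => c P = i)).card :=
    Finset.card_eq_sum_card_fiberwise hmem
  have hfib : ∀ i ∈ T \ S, (PairsR.filter (fun P => c P = i)).card ≤ 3 := by
    intro i hi
    rw [Finset.mem_sdiff] at hi
    have hsub : PairsR.filter (fun P => c P = i) ⊆ cls i := by
      intro P hP
      rw [Finset.mem_filter] at hP ⊢
      have := Finset.mem_powersetCard.mp hP.1
      exact ⟨Finset.mem_powersetCard.mpr ⟨Finset.subset_univ _, this.2⟩, hP.2⟩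
    refine le_trans (Finset.card_le_card hsub) ?_
    apply intersecting_no_common_le_three
    · intro A hA
      exact (Finset.mem_powersetCard.mp (Finset.mem_filter.mp hA).1).2
    · intro A hA B hB hdisj
      have hA' := Finset.mem_filter.mp hA
      have hB' := Finset.mem_filter.mp hB
      exact hc A B (Finset.mem_powersetCard.mp hA'.1).2
        (Finset.mem_powersetCard.mp hB'.1).2 hdisj (hA'.2.trans hB'.2.symm)
    · intro hex
      exact hi.2 (Finset.mem_filter.mpr ⟨hi.1, hex⟩)
  have hbound : PairsR.card ≤ 3 * (T \ S).card := by
    rw [hsum]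
    calc ∑ i ∈ T \ S, (PairsR.filter (fun P => c P = i)).card
        ≤ ∑ _i ∈ T \ S, 3 := Finset.sum_le_sum hfib
      _ = (T \ S).card * 3 := by rw [Finset.sum_const, smul_eq_mul]
      _ = 3 * (T \ S).card := by ring
  have hSsub : S ⊆ T := Finset.filter_subset _ _
  have hScard : S.card ≤ T.card := Finset.card_le_card hSsub
  have hTS : (T \ S).card = T.card - S.card := Finset.card_sdiff_of_subset hSsub
  set s := S.card
  set t := T.card
  set u := t - s with hu
  have hPRcard : PairsR.card = R.card.choose 2 := by
    rw [hPR, Finset.card_powersetCard]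
  have hch : (u + 3).choose 2 ≤ 3 * u := by
    calc (u + 3).choose 2 ≤ R.card.choose 2 := Nat.choose_le_choose 2 (by omega)
      _ = PairsR.card := hPRcard.symm
      _ ≤ 3 * (T \ S).card := hbound
      _ = 3 * u := by rw [hTS]
  have heven : 2 * ((u + 3).choose 2) = (u + 3) * (u + 2) := by
    rw [Nat.choose_two_right]
    have : Even ((u + 3) * (u + 2)) := by
      rw [mul_comm]; exact Nat.even_mul_succ_self (u + 2)
    obtain ⟨k, hk⟩ := this
    have h2 : (u + 3) * (u + 3 - 1) = 2 * k := by
      simpa [two_mul] using hk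
    rw [h2]
    omega
  have h6 : (u + 3) * (u + 2) ≤ 6 * u := by omega
  have hexp : (u + 3) * (u + 2) = u * u + 5 * u + 6 := by ring
  have hm : u ≤ u * u := by
    rcases Nat.eq_zero_or_pos u with h0 | hpos
    · rw [h0]
    · exact Nat.le_mul_of_pos_left u hpos
  omega

lemma pair_not_face (d : ℕ) (j : Fin d) (a b : Fin (d+1)) (hab : a ≠ b) :
    ({(a, j), (b, j)} : Finset (Fin (d+1) × Fin d)) ∉ joinOfPoints d := by
  intro h
  have := h j
  have hne : ((a, j) : Fin (d+1) × Fin d) ≠ (b, j) := by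
    simp [Prod.ext_iff, hab]
  rw [Finset.filter_true_of_mem (by simp)] at this
  rw [Finset.card_insert_of_notMem (by simp [hne]), Finset.card_singleton] at this
  omega

lemma part1 (d : ℕ) (F : Finset (Fin (d + 1) × Fin d)) :
    IsMinNF d F ↔ ∃ (j : Fin d) (a b : Fin (d + 1)), a ≠ b ∧ F = {(a, j), (b, j)} := by
  constructor
  · rintro ⟨hnf, hmin⟩
    have : ∃ j : Fin d, 1 < (F.filter fun p => p.2 = j).card := by
      by_contra h
      push_neg at h
      exact hnf (fun j => h j)
    obtain ⟨j, hj⟩ := this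
    obtain ⟨p, hp, q, hq, hpq⟩ := Finset.one_lt_card.mp hj
    rw [Finset.mem_filter] at hp hq
    have hpj : p = (p.1, j) := by rw [← hp.2]
    have hqj : q = (q.1, j) := by rw [← hq.2]
    have hab : p.1 ≠ q.1 := by
      intro h
      apply hpq
      rw [hpj, hqj, h]
    refine ⟨j, p.1, q.1, hab, ?_⟩
    have hsub : ({(p.1, j), (q.1, j)} : Finset (Fin (d+1) × Fin d)) ⊆ F := by
      intro x hx
      rcases Finset.mem_insert.mp hx with h | h
      · rw [h, ← hpj]; exact hp.1
      · rw [Finset.mem_singleton.mp h, ← hqj]; exact hq.1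
    rcases eq_or_lt_of_le (Finset.le_iff_subset.mpr hsub) with h | h
    · exact h.symm
    · exact absurd (hmin _ h) (pair_not_face d j p.1 q.1 hab)
  · rintro ⟨j, a, b, hab, rfl⟩
    refine ⟨pair_not_face d j a b hab, fun G hG => ?_⟩
    have hcard : G.card ≤ 1 := by
      have h2 : ({(a, j), (b, j)} : Finset (Fin (d+1) × Fin d)).card ≤ 2 :=
        (Finset.card_insert_le _ _).trans (by simp)
      have := Finset.card_lt_card hG
      omega
    intro j'
    exact le_trans (Finset.card_le_card (Finset.filter_subset _ _)) hcard

/-- The minimal non-faces of the `d`-fold join of `d + 1` points are exactly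
the pairs `{(a, j), (b, j)}` with `a ≠ b`, and the Kneser graph of the minimal
non-faces has chromatic number `d * (d - 1)`. -/
theorem minNF_and_chromaticNumber (d : ℕ) (hd : 2 ≤ d) :
    (∀ F : Finset (Fin (d + 1) × Fin d),
      IsMinNF d F ↔ ∃ (j : Fin d) (a b : Fin (d + 1)), a ≠ b ∧ F = {(a, j), (b, j)}) ∧
    (minNFKneser d).chromaticNumber = (d * (d - 1) : ℕ) := by
  classical
  refine ⟨part1 d, ?_⟩
  -- UPPER BOUND: construct a coloring with d * (d - 1) colors
  set VT := {F : Finset (Fin (d + 1) × Fin d) // IsMinNF d F} with hVT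
  have hdec : ∀ v : VT, ∃ (j : Fin d) (a b : Fin (d + 1)), a ≠ b ∧
      v.1 = {(a, j), (b, j)} := fun v => (part1 d v.1).mp v.2
  let jOf : VT → Fin d := fun v => (hdec v).choose
  have hrest : ∀ v : VT, ∃ a b : Fin (d + 1), a ≠ b ∧
      v.1 = {(a, jOf v), (b, jOf v)} := fun v => (hdec v).choose_spec
  let aOf : VT → Fin (d + 1) := fun v => (hrest v).choose
  have hrest2 : ∀ v : VT, ∃ b : Fin (d + 1), aOf v ≠ b ∧
      v.1 = {(aOf v, jOf v), (b, jOf v)} := fun v => (hrest v).choose_spec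
  let bOf : VT → Fin (d + 1) := fun v => (hrest2 v).choose
  have hspec : ∀ v : VT, aOf v ≠ bOf v ∧
      v.1 = {(aOf v, jOf v), (bOf v, jOf v)} := fun v => (hrest2 v).choose_spec
  let f : VT → Fin d × Fin (d - 1) := fun v =>
    (jOf v, ⟨min (min (aOf v : ℕ) (bOf v : ℕ)) (d - 2), by omega⟩)
  have hvalid : ∀ v w : VT, (minNFKneser d).Adj v w → f v ≠ f w := by
    intro v w hadj hfeq
    obtain ⟨hne, hdisj⟩ := hadj
    have h1 := hspec v
    have h2 := hspec w
    have hj : jOf v = jOf w := congrArg Prod.fst hfeq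
    have hm : min (min (aOf v : ℕ) (bOf v : ℕ)) (d - 2)
        = min (min (aOf w : ℕ) (bOf w : ℕ)) (d - 2) := by
      have := congrArg Prod.snd hfeq
      simpa [f] using congrArg Fin.val this
    -- pairwise distinctness from disjointness
    have hmemv : ∀ x : Fin (d + 1), (x, jOf v) ∈ v.1 → (x : ℕ) ≠ (aOf w : ℕ) ∧ (x : ℕ) ≠ (bOf w : ℕ) := by
      intro x hx
      constructor <;> intro hval <;> apply Finset.disjoint_left.mp hdisj hx
      · rw [h2.2, hj]
        have : x = aOf w := Fin.val_injective hval
        simp [this]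
      · rw [h2.2, hj]
        have : x = bOf w := Fin.val_injective hval
        simp [this]
    have hav : ((aOf v, jOf v) : Fin (d+1) × Fin d) ∈ v.1 := by rw [h1.2]; simp
    have hbv : ((bOf v, jOf v) : Fin (d+1) × Fin d) ∈ v.1 := by rw [h1.2]; simp
    have haa := hmemv _ hav
    have hbb := hmemv _ hbv
    have hab1 : (aOf v : ℕ) ≠ (bOf v : ℕ) := fun h => h1.1 (Fin.val_injective h)
    have hab2 : (aOf w : ℕ) ≠ (bOf w : ℕ) := fun h => h2.1 (Fin.val_injective h)
    have b1 : (aOf v : ℕ) < d + 1 := (aOf v).2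
    have b2 : (bOf v : ℕ) < d + 1 := (bOf v).2
    have b3 : (aOf w : ℕ) < d + 1 := (aOf w).2
    have b4 : (bOf w : ℕ) < d + 1 := (bOf w).2
    omega
  let CUp : (minNFKneser d).Coloring (Fin d × Fin (d - 1)) :=
    SimpleGraph.Coloring.mk f (fun {v w} h => hvalid v w h)
  have hcolorable : (minNFKneser d).Colorable (d * (d - 1)) := by
    have := CUp.colorable
    rwa [Fintype.card_prod, Fintype.card_fin, Fintype.card_fin] at this
  -- LOWER BOUND
  have hlower : ∀ m : ℕ, (minNFKneser d).Colorable m → d * (d - 1) ≤ m := by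
    intro m hm
    obtain ⟨C⟩ := hm
    -- a default vertex
    have hj0 : (0 : ℕ) < d := by omega
    have hv0 : IsMinNF d {((0 : Fin (d+1)), (⟨0, hj0⟩ : Fin d)), ((1 : Fin (d+1)), ⟨0, hj0⟩)} := by
      rw [part1 d]
      exact ⟨⟨0, hj0⟩, 0, 1, by simp [Fin.ext_iff]; omega, rfl⟩
    let v0 : VT := ⟨_, hv0⟩
    -- the vertex attached to a 2-set in column j
    have htoV : ∀ (j : Fin d) (A : Finset (Fin (d + 1))), A.card = 2 →
        IsMinNF d (A.image fun a => (a, j)) := by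
      intro j A hA
      obtain ⟨a, b, hab, rfl⟩ := Finset.card_eq_two.mp hA
      rw [part1 d]
      exact ⟨j, a, b, hab, by rw [Finset.image_insert, Finset.image_singleton]⟩
    let cj : Fin d → Finset (Fin (d + 1)) → Fin m := fun j A =>
      if h : A.card = 2 then C ⟨A.image fun a => (a, j), htoV j A h⟩ else C v0
    have hne_of_disj : ∀ (v w : VT), Disjoint v.1 w.1 → v.1.Nonempty → v ≠ w := by
      intro v w hdisj hnon heq
      rw [heq] at hdisj hnon
      rw [Finset.disjoint_self_iff_empty] at hdisj
      rw [hdisj] at hnon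
      exact Finset.not_nonempty_empty hnon
    have hcj : ∀ j : Fin d, ∀ A B : Finset (Fin (d + 1)),
        A.card = 2 → B.card = 2 → Disjoint A B → cj j A ≠ cj j B := by
      intro j A B hA hB hdisj
      simp only [cj, dif_pos hA, dif_pos hB]
      apply C.valid
      have hdisj' : Disjoint (A.image fun a => (a, j)) (B.image fun a => (a, j)) := by
        rw [Finset.disjoint_left]
        rintro p hp hq
        obtain ⟨a, ha, rfl⟩ := Finset.mem_image.mp hp
        obtain ⟨b, hb, hba⟩ := Finset.mem_image.mp hq
        have : b = a := congrArg Prod.fst hba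
        rw [this] at hb
        exact Finset.disjoint_left.mp hdisj ha hb
      refine ⟨?_, hdisj'⟩
      apply hne_of_disj _ _ hdisj'
      rw [Finset.image_nonempty]
      rw [← Finset.card_pos, hA]; omega
    -- used color sets per column
    let T : Fin d → Finset (Fin m) := fun j =>
      ((Finset.univ : Finset (Fin (d + 1))).powersetCard 2).image (cj j)
    have hTcard : ∀ j, d - 1 ≤ (T j).card := by
      intro j
      have := kneser2 (cj j) (hcj j)
      simpa using this
    have hTdisj : ∀ j j' : Fin d, j ≠ j' → Disjoint (T j) (T j') := by
      intro j j' hjj'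
      rw [Finset.disjoint_left]
      rintro x hx hx'
      obtain ⟨A, hA, hxA⟩ := Finset.mem_image.mp hx
      obtain ⟨B, hB, hxB⟩ := Finset.mem_image.mp hx'
      rw [Finset.mem_powersetCard] at hA hB
      rw [← hxB] at hxA
      revert hxA
      simp only [cj, dif_pos hA.2, dif_pos hB.2]
      apply C.valid
      have hdisj' : Disjoint (A.image fun a => (a, j)) (B.image fun a => (a, j')) := by
        rw [Finset.disjoint_left]
        rintro p hp hq
        obtain ⟨a, ha, rfl⟩ := Finset.mem_image.mp hp
        obtain ⟨b, hb, hba⟩ := Finset.mem_image.mp hq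
        exact hjj' (congrArg Prod.snd hba).symm
      refine ⟨?_, hdisj'⟩
      apply hne_of_disj _ _ hdisj'
      rw [Finset.image_nonempty, ← Finset.card_pos, hA.2]; omega
    have hsum : d * (d - 1) ≤ ∑ j : Fin d, (T j).card := by
      calc d * (d - 1) = ∑ _j : Fin d, (d - 1) := by
            rw [Finset.sum_const, Finset.card_univ, Fintype.card_fin, smul_eq_mul]
        _ ≤ ∑ j : Fin d, (T j).card := Finset.sum_le_sum fun j _ => hTcard j
    have hbiU : ∑ j : Fin d, (T j).card = (Finset.univ.biUnion T).card :=
      (Finset.card_biUnion fun j _ j' _ h => hTdisj j j' h).symm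
    calc d * (d - 1) ≤ ∑ j : Fin d, (T j).card := hsum
      _ = (Finset.univ.biUnion T).card := hbiU
      _ ≤ Fintype.card (Fin m) := Finset.card_le_univ _
      _ = m := Fintype.card_fin m
  -- conclude
  apply le_antisymm
  · exact hcolorable.chromaticNumber_le
  · rw [SimpleGraph.chromaticNumber_eq_biInf]
    refine le_iInf₂ fun n hn => ?_
    exact_mod_cast hlower n hn
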